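/- Let (F,G): A → B be an adjoint pair between bicomplete abelian categories and (φ,ψ) the induced Galois connection between Pr(A) and Pr(B). For any morphism h: N → M in A, φ(α_h) = α_{F(h)}, where α_h denotes the alpha preradical associated to h. -/

import Mathlib

open CategoryTheory CategoryTheory.Limits

universe v u

section AlphaDefs

variable {C : Type u} [Category.{v} C] [Abelian C] [HasLimits C] [HasColimits C]

/-- The functor `𝔸_M^N = N^{(Hom(M,−))}`. -/
noncomputable def alphaFunctor (N M : C) : C ⥤ C where
  obj L := ∐ (fun _ : (M ⟶ L) => N)
  map {L L'} g := Sigma.desc (fun f => Sigma.ι (fun _ : (M ⟶ L') => N) (f ≫ g))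

/-- The natural transformation `𝔞_h : 𝔸_M^N ⟶ 1_C`, with `[𝔞_h]_L ∘ i_f = f ∘ h`. -/
noncomputable def alphaTrans {N M : C} (h : N ⟶ M) : alphaFunctor N M ⟶ 𝟭 C where
  app L := Sigma.desc (fun f : M ⟶ L => h ≫ f)
  naturality L L' g := by
    dsimp [alphaFunctor]
    ext f
    simp

/-- The alpha preradical `α_h := Im(𝔞_h)` associated to `h : N ⟶ M`. -/
noncomputable def alphaPrerad {N M : C} (h : N ⟶ M) : Subobject (𝟭 C) :=
  imageSubobject (alphaTrans h)

end AlphaDefs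

variable {A : Type u} [Category.{v} A] [Abelian A] [HasLimits A] [HasColimits A]
variable {B : Type u} [Category.{v} B] [Abelian B] [HasLimits B] [HasColimits B]
variable (F : A ⥤ B) (G : B ⥤ A) (adj : F ⊣ G)

/-- `φ(τ) = Im(ε ∘ FτG)`. -/
noncomputable def preradPhi (τ : Subobject (𝟭 A)) : Subobject (𝟭 B) :=
  imageSubobject
    ((Functor.whiskerRight (Functor.whiskerLeft G τ.arrow) F ≫ adj.counit :
      (G ⋙ (τ : A ⥤ A)) ⋙ F ⟶ 𝟭 B))

section MyAux

variable {C : Type u} [Category.{v} C] [Abelian C]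

/-- Precomposing with an epimorphism does not change the image subobject. -/
lemma my_imageSubobject_comp_self_of_epi {X' X Y : C} (e : X' ⟶ X) [Epi e] (f : X ⟶ Y) :
    imageSubobject (e ≫ f) = imageSubobject f := by
  refine le_antisymm (imageSubobject_comp_le e f) ?_
  haveI : StrongEpi e := strongEpi_of_epi e
  have sq : CommSq (factorThruImageSubobject (e ≫ f)) e
      (imageSubobject (e ≫ f)).arrow f := ⟨by simp⟩
  exact imageSubobject_le f sq.lift sq.fac_right

/-- Two morphisms factoring through one another have the same image subobject. -/
lemma my_imageSubobject_eq_of_mutual {X X' Y : C} (f : X ⟶ Y) (g : X' ⟶ Y)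
    (u : X ⟶ X') (v : X' ⟶ X) (hu : u ≫ g = f) (hv : v ≫ f = g) :
    imageSubobject f = imageSubobject g :=
  le_antisymm (by rw [← hu]; exact imageSubobject_comp_le u g)
    (by rw [← hv]; exact imageSubobject_comp_le v f)

end MyAux

namespace PreradPhiAlpha

variable {F G}

/-- Joint epimorphy of `F.map (Sigma.ι D j)` for a left adjoint `F`. -/
lemma Fcofan_ext {J : Type v} (D : J → A) {Z : B} {p q : F.obj (∐ D) ⟶ Z}
    (adj : F ⊣ G)
    (w : ∀ j, F.map (Sigma.ι D j) ≫ p = F.map (Sigma.ι D j) ≫ q) : p = q := by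
  haveI : PreservesColimitsOfSize.{v, v} F := adj.leftAdjoint_preservesColimits
  refine (cancel_epi (sigmaComparison F D)).1 ?_
  ext j
  simp only [ι_comp_sigmaComparison_assoc]
  exact w j

/-- Component of the comparison map `F(𝔸_M^N(G X)) ⟶ 𝔸_{FM}^{FN}(X)`. -/
noncomputable def compareLeftApp (adj : F ⊣ G) (N M : A) (X : B) :
    F.obj (∐ (fun _ : (M ⟶ G.obj X) => N)) ⟶ ∐ (fun _ : (F.obj M ⟶ X) => F.obj N) :=
  haveI : PreservesColimitsOfSize.{v, v} F := adj.leftAdjoint_preservesColimits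
  inv (sigmaComparison F (fun _ : (M ⟶ G.obj X) => N)) ≫
    Sigma.desc (fun f => Sigma.ι (fun _ : (F.obj M ⟶ X) => F.obj N)
      ((adj.homEquiv M X).symm f))

lemma ι_compareLeftApp (adj : F ⊣ G) (N M : A) (X : B) (f : M ⟶ G.obj X) :
    F.map (Sigma.ι (fun _ : (M ⟶ G.obj X) => N) f) ≫ compareLeftApp adj N M X =
      Sigma.ι (fun _ : (F.obj M ⟶ X) => F.obj N) ((adj.homEquiv M X).symm f) := by
  haveI : PreservesColimitsOfSize.{v, v} F := adj.leftAdjoint_preservesColimits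
  rw [compareLeftApp, ← ι_comp_sigmaComparison]
  simp only [Category.assoc, IsIso.hom_inv_id_assoc, colimit.ι_desc, Cofan.mk_ι_app]

/-- The comparison map `F ∘ 𝔸_M^N ∘ G ⟶ 𝔸_{FM}^{FN}` reindexing along the adjunction. -/
noncomputable def compareLeft (adj : F ⊣ G) (N M : A) :
    (G ⋙ alphaFunctor N M) ⋙ F ⟶ alphaFunctor (F.obj N) (F.obj M) where
  app X := compareLeftApp adj N M X
  naturality X X' g := by
    dsimp [alphaFunctor]
    refine Fcofan_ext _ adj (fun f => ?_)
    rw [← Category.assoc, ← F.map_comp]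
    simp only [colimit.ι_desc, Cofan.mk_ι_app]
    rw [ι_compareLeftApp adj N M X' (f ≫ G.map g),
      ← Category.assoc, ι_compareLeftApp adj N M X f]
    simp [Adjunction.homEquiv_naturality_right_symm]

lemma compareLeft_fac {N M : A} (adj : F ⊣ G) (h : N ⟶ M) :
    compareLeft adj N M ≫ alphaTrans (F.map h) =
      Functor.whiskerRight (Functor.whiskerLeft G (alphaTrans h)) F ≫ adj.counit := by
  ext X
  dsimp [compareLeft, alphaTrans, alphaFunctor]
  refine Fcofan_ext _ adj (fun f => ?_)
  rw [← Category.assoc, ι_compareLeftApp adj N M X f, ← Category.assoc (F.map _), ← F.map_comp]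
  simp [Adjunction.homEquiv_counit]

/-- The comparison map `𝔸_{FM}^{FN} ⟶ F ∘ 𝔸_M^N ∘ G` reindexing along the adjunction. -/
noncomputable def compareRight (adj : F ⊣ G) (N M : A) :
    alphaFunctor (F.obj N) (F.obj M) ⟶ (G ⋙ alphaFunctor N M) ⋙ F where
  app X := Sigma.desc (fun g : F.obj M ⟶ X =>
    F.map (Sigma.ι (fun _ : (M ⟶ G.obj X) => N) (adj.homEquiv M X g)))
  naturality X X' g := by
    dsimp [alphaFunctor]
    ext g'
    simp only [colimit.ι_desc_assoc, Cofan.mk_ι_app, colimit.ι_desc, ← F.map_comp]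
    rw [Adjunction.homEquiv_naturality_right]

lemma compareRight_fac {N M : A} (adj : F ⊣ G) (h : N ⟶ M) :
    compareRight adj N M ≫ (Functor.whiskerRight (Functor.whiskerLeft G (alphaTrans h)) F ≫ adj.counit) =
      alphaTrans (F.map h) := by
  ext X
  dsimp [compareRight, alphaTrans, alphaFunctor]
  ext g
  simp only [colimit.ι_desc_assoc, Cofan.mk_ι_app, colimit.ι_desc]
  rw [← Category.assoc, ← F.map_comp]
  simp only [colimit.ι_desc, Cofan.mk_ι_app]
  rw [F.map_comp, Category.assoc, ← Adjunction.homEquiv_counit, Equiv.symm_apply_apply]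

end PreradPhiAlpha

open PreradPhiAlpha in
/-- The coadjoint part `φ` of the induced Galois connection sends alpha preradicals
to alpha preradicals: `φ(α_h) = α_{F(h)}`. -/
theorem preradPhi_alphaPrerad {N M : A} (h : N ⟶ M) :
    preradPhi F G adj (alphaPrerad h) = alphaPrerad (F.map h) := by
  haveI : F.IsLeftAdjoint := ⟨G, ⟨adj⟩⟩
  set e : alphaFunctor N M ⟶ (alphaPrerad h : A ⥤ A) := factorThruImageSubobject (alphaTrans h) with he
  have epi_e : Epi e := inferInstanceAs (Epi (factorThruImageSubobject (alphaTrans h)))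
  have epi_app : ∀ X : B,
      Epi ((Functor.whiskerRight (Functor.whiskerLeft G e) F).app X) := by
    intro X
    haveI : Epi ((Functor.whiskerLeft G e).app X) := inferInstanceAs (Epi (e.app (G.obj X)))
    exact F.map_epi ((Functor.whiskerLeft G e).app X)
  haveI : Epi (Functor.whiskerRight (Functor.whiskerLeft G e) F) := NatTrans.epi_of_epi_app _
  have e1 : Functor.whiskerRight (Functor.whiskerLeft G e) F ≫
      (Functor.whiskerRight (Functor.whiskerLeft G (alphaPrerad h).arrow) F ≫ adj.counit) =
      Functor.whiskerRight (Functor.whiskerLeft G (alphaTrans h)) F ≫ adj.counit := by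
    rw [← Category.assoc, ← Functor.whiskerRight_comp, ← Functor.whiskerLeft_comp]
    have : e ≫ (alphaPrerad h).arrow = alphaTrans h :=
      imageSubobject_arrow_comp (alphaTrans h)
    rw [this]
  have key : imageSubobject
        (Functor.whiskerRight (Functor.whiskerLeft G (alphaPrerad h).arrow) F ≫ adj.counit) =
      imageSubobject (Functor.whiskerRight (Functor.whiskerLeft G (alphaTrans h)) F ≫ adj.counit) := by
    rw [← my_imageSubobject_comp_self_of_epi (Functor.whiskerRight (Functor.whiskerLeft G e) F)
      (Functor.whiskerRight (Functor.whiskerLeft G (alphaPrerad h).arrow) F ≫ adj.counit), e1]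
  show imageSubobject _ = _
  rw [key]
  exact my_imageSubobject_eq_of_mutual _ _ (compareLeft adj N M) (compareRight adj N M)
    (compareLeft_fac adj h) (compareRight_fac adj h)
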